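/- Let d ≥ 1, H ∈ ℕ, and let μ_src and μ_tgt be Borel probability measures on ℝ^d with finite second moments. Let π_0,…,π_H : ℝ^d → ℝ^d be measurable maps feasible for transporting μ_src to μ_tgt whose dynamic cost equals W₂²(μ_src, μ_tgt). Then for μ_src-almost every x, the increments of the induced trajectory are all equal: π̄_h(x) − π̄_{h−1}(x) = π̄_0(x) − x for every h ∈ {0,…,H}; moreover the composite map π̄_H is an optimal Monge map, i.e. ½∫‖π̄_H(x) − x‖² dμ_src(x) = W₂²(μ_src, μ_tgt). -/

import Mathlib

open MeasureTheory ENNReal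

/-- The squared Wasserstein-2 distance. -/
noncomputable def W2sq {d : ℕ} (μ ν : Measure (EuclideanSpace ℝ (Fin d))) : ℝ≥0∞ :=
  ⨅ (γ : Measure (EuclideanSpace ℝ (Fin d) × EuclideanSpace ℝ (Fin d)))
    (_ : IsProbabilityMeasure γ ∧ γ.map Prod.fst = μ ∧ γ.map Prod.snd = ν),
      2⁻¹ * ∫⁻ p, (‖p.1 - p.2‖₊ : ℝ≥0∞) ^ 2 ∂γ

/-- `trajComp π h = π̄_{h-1} = π_{h-1} ∘ ⋯ ∘ π_0`, with `trajComp π 0 = π̄_{-1} = id`. -/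
def trajComp {α : Type*} (π : ℕ → α → α) : ℕ → α → α
  | 0 => id
  | n + 1 => π n ∘ trajComp π n

section AuxLemmas
open NNReal Finset

lemma sum_sq_identity {F : Type*} [NormedAddCommGroup F] [InnerProductSpace ℝ F]
    (n : ℕ) (v : ℕ → F) :
    (2 : ℝ) * n * ∑ i ∈ range n, ‖v i‖ ^ 2 =
      (∑ i ∈ range n, ∑ j ∈ range n, ‖v i - v j‖ ^ 2) + 2 * ‖∑ i ∈ range n, v i‖ ^ 2 := by
  have h : ∀ a b : F, ‖a - b‖ ^ 2 = ‖a‖ ^ 2 - 2 * inner ℝ a b + ‖b‖ ^ 2 := fun a b => by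
    rw [@norm_sub_sq_real]
  simp_rw [h, Finset.sum_add_distrib, Finset.sum_sub_distrib, Finset.sum_const,
    ← Finset.mul_sum, ← inner_sum, ← sum_inner, real_inner_self_eq_norm_sq,
    Finset.card_range, nsmul_eq_mul]
  rw [← Finset.mul_sum]; ring

lemma norm_sum_sq_le {F : Type*} [NormedAddCommGroup F] [InnerProductSpace ℝ F]
    (n : ℕ) (v : ℕ → F) :
    ‖∑ i ∈ range n, v i‖ ^ 2 ≤ (n : ℝ) * ∑ i ∈ range n, ‖v i‖ ^ 2 := by
  have := sum_sq_identity n v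
  have hnn : (0:ℝ) ≤ ∑ i ∈ range n, ∑ j ∈ range n, ‖v i - v j‖ ^ 2 :=
    Finset.sum_nonneg fun i _ => Finset.sum_nonneg fun j _ => by positivity
  nlinarith

lemma eq_of_norm_sum_sq_eq {F : Type*} [NormedAddCommGroup F] [InnerProductSpace ℝ F]
    (n : ℕ) (v : ℕ → F)
    (h : ‖∑ i ∈ range n, v i‖ ^ 2 = (n : ℝ) * ∑ i ∈ range n, ‖v i‖ ^ 2) :
    ∀ i ∈ range n, ∀ j ∈ range n, v i = v j := by
  have hid := sum_sq_identity n v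
  have hz : ∑ i ∈ range n, ∑ j ∈ range n, ‖v i - v j‖ ^ 2 = 0 := by nlinarith
  intro i hi j hj
  have h1 := (Finset.sum_eq_zero_iff_of_nonneg
    (fun i _ => Finset.sum_nonneg fun j _ => by positivity)).mp hz i hi
  have h2 := (Finset.sum_eq_zero_iff_of_nonneg (fun j _ => by positivity)).mp h1 j hj
  have := pow_eq_zero_iff (n := 2) (by norm_num) |>.mp h2
  rwa [norm_eq_zero, sub_eq_zero] at this

lemma enn_norm_sum_sq_le {F : Type*} [NormedAddCommGroup F] [InnerProductSpace ℝ F]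
    (n : ℕ) (v : ℕ → F) :
    (‖∑ i ∈ range n, v i‖₊ : ℝ≥0∞) ^ 2 ≤ (n : ℝ≥0∞) * ∑ i ∈ range n, (‖v i‖₊ : ℝ≥0∞) ^ 2 := by
  have h : (‖∑ i ∈ range n, v i‖₊ : ℝ≥0) ^ 2 ≤ (n : ℝ≥0) * ∑ i ∈ range n, ‖v i‖₊ ^ 2 := by
    rw [← NNReal.coe_le_coe]; push_cast; exact norm_sum_sq_le n v
  exact_mod_cast h

lemma real_eq_of_enn_eq {F : Type*} [NormedAddCommGroup F] [InnerProductSpace ℝ F]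
    (n : ℕ) (v : ℕ → F)
    (h : (‖∑ i ∈ range n, v i‖₊ : ℝ≥0∞) ^ 2 = (n : ℝ≥0∞) * ∑ i ∈ range n, (‖v i‖₊ : ℝ≥0∞) ^ 2) :
    ‖∑ i ∈ range n, v i‖ ^ 2 = (n : ℝ) * ∑ i ∈ range n, ‖v i‖ ^ 2 := by
  have h' : (‖∑ i ∈ range n, v i‖₊ : ℝ≥0) ^ 2 = (n : ℝ≥0) * ∑ i ∈ range n, ‖v i‖₊ ^ 2 := by
    exact_mod_cast h
  have := congrArg (NNReal.toReal) h'
  push_cast at this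
  exact this

section measure
variable {d : ℕ}

lemma sq_dist_bound (a b : EuclideanSpace ℝ (Fin d)) :
    (‖a - b‖₊ : ℝ≥0∞) ^ 2 ≤ 2 * ((‖a‖₊ : ℝ≥0∞) ^ 2 + (‖b‖₊ : ℝ≥0∞) ^ 2) := by
  have h : (‖a - b‖₊ : ℝ≥0) ^ 2 ≤ 2 * (‖a‖₊ ^ 2 + ‖b‖₊ ^ 2) := by
    rw [← NNReal.coe_le_coe]; push_cast
    nlinarith [norm_sub_le a b, norm_nonneg (a - b), sq_nonneg (‖a‖ - ‖b‖),
      norm_nonneg a, norm_nonneg b]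
  exact_mod_cast h

lemma W2sq_le_map {μ ν : Measure (EuclideanSpace ℝ (Fin d))} [IsProbabilityMeasure μ]
    (f : EuclideanSpace ℝ (Fin d) → EuclideanSpace ℝ (Fin d)) (hf : Measurable f)
    (hmap : μ.map f = ν) :
    W2sq μ ν ≤ 2⁻¹ * ∫⁻ x, (‖f x - x‖₊ : ℝ≥0∞) ^ 2 ∂μ := by
  have hg : Measurable fun x => (x, f x) := measurable_id.prodMk hf
  have h1 : (μ.map fun x => (x, f x)).map Prod.fst = μ := by
    rw [Measure.map_map measurable_fst hg,
      show (Prod.fst ∘ fun x => (x, f x)) = id from rfl, Measure.map_id]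
  have h2 : (μ.map fun x => (x, f x)).map Prod.snd = ν := by
    rw [Measure.map_map measurable_snd hg,
      show (Prod.snd ∘ fun x => (x, f x)) = f from rfl, hmap]
  have hint : ∫⁻ p, (‖p.1 - p.2‖₊ : ℝ≥0∞) ^ 2 ∂(μ.map fun x => (x, f x))
      = ∫⁻ x, (‖f x - x‖₊ : ℝ≥0∞) ^ 2 ∂μ := by
    rw [lintegral_map (f := fun p : EuclideanSpace ℝ (Fin d) × EuclideanSpace ℝ (Fin d) =>
        (‖p.1 - p.2‖₊ : ℝ≥0∞) ^ 2) ((measurable_fst.sub measurable_snd).nnnorm.coe_nnreal_ennreal.pow_const 2) hg]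
    exact lintegral_congr fun x => by rw [← neg_sub (f x) x, nnnorm_neg]
  have hprob : IsProbabilityMeasure (μ.map fun x => (x, f x)) :=
    Measure.isProbabilityMeasure_map hg.aemeasurable
  calc W2sq μ ν ≤ 2⁻¹ * ∫⁻ p, (‖p.1 - p.2‖₊ : ℝ≥0∞) ^ 2 ∂(μ.map fun x => (x, f x)) :=
        iInf₂_le _ ⟨hprob, h1, h2⟩
    _ = _ := by rw [hint]

lemma W2sq_ne_top {μ ν : Measure (EuclideanSpace ℝ (Fin d))}
    [IsProbabilityMeasure μ] [IsProbabilityMeasure ν]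
    (h2μ : ∫⁻ x, (‖x‖₊ : ℝ≥0∞) ^ 2 ∂μ ≠ ⊤) (h2ν : ∫⁻ x, (‖x‖₊ : ℝ≥0∞) ^ 2 ∂ν ≠ ⊤) :
    W2sq μ ν ≠ ⊤ := by
  have h1 : (μ.prod ν).map Prod.fst = μ := by
    rw [Measure.map_fst_prod]; simp
  have h2 : (μ.prod ν).map Prod.snd = ν := by
    rw [Measure.map_snd_prod]; simp
  have hmn : Measurable fun x : EuclideanSpace ℝ (Fin d) => (‖x‖₊ : ℝ≥0∞) ^ 2 :=
    measurable_nnnorm.coe_nnreal_ennreal.pow_const 2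
  have hm1 : Measurable fun p : EuclideanSpace ℝ (Fin d) × EuclideanSpace ℝ (Fin d) =>
      (‖p.1‖₊ : ℝ≥0∞) ^ 2 := measurable_fst.nnnorm.coe_nnreal_ennreal.pow_const 2
  have hm2 : Measurable fun p : EuclideanSpace ℝ (Fin d) × EuclideanSpace ℝ (Fin d) =>
      (‖p.2‖₊ : ℝ≥0∞) ^ 2 := measurable_snd.nnnorm.coe_nnreal_ennreal.pow_const 2
  have i1 : ∫⁻ p, (‖p.1‖₊ : ℝ≥0∞) ^ 2 ∂(μ.prod ν) = ∫⁻ x, (‖x‖₊ : ℝ≥0∞) ^ 2 ∂μ := by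
    conv_rhs => rw [← h1]
    rw [lintegral_map hmn measurable_fst]
  have i2 : ∫⁻ p, (‖p.2‖₊ : ℝ≥0∞) ^ 2 ∂(μ.prod ν) = ∫⁻ x, (‖x‖₊ : ℝ≥0∞) ^ 2 ∂ν := by
    conv_rhs => rw [← h2]
    rw [lintegral_map hmn measurable_snd]
  have hb : ∫⁻ p, (‖p.1 - p.2‖₊ : ℝ≥0∞) ^ 2 ∂(μ.prod ν)
      ≤ 2 * ((∫⁻ x, (‖x‖₊ : ℝ≥0∞) ^ 2 ∂μ) + ∫⁻ x, (‖x‖₊ : ℝ≥0∞) ^ 2 ∂ν) := by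
    calc ∫⁻ p, (‖p.1 - p.2‖₊ : ℝ≥0∞) ^ 2 ∂(μ.prod ν)
        ≤ ∫⁻ p, 2 * ((‖p.1‖₊ : ℝ≥0∞) ^ 2 + (‖p.2‖₊ : ℝ≥0∞) ^ 2) ∂(μ.prod ν) :=
          lintegral_mono fun p => sq_dist_bound p.1 p.2
      _ = 2 * ((∫⁻ p, (‖p.1‖₊ : ℝ≥0∞) ^ 2 ∂(μ.prod ν))
            + ∫⁻ p, (‖p.2‖₊ : ℝ≥0∞) ^ 2 ∂(μ.prod ν)) := by
          rw [lintegral_const_mul (2:ℝ≥0∞) (f := fun p : EuclideanSpace ℝ (Fin d) × EuclideanSpace ℝ (Fin d) =>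
            (‖p.1‖₊ : ℝ≥0∞) ^ 2 + (‖p.2‖₊ : ℝ≥0∞) ^ 2) (hm1.add hm2), lintegral_add_left hm1]
      _ = _ := by rw [i1, i2]
  have hle : W2sq μ ν ≤ 2⁻¹ * ∫⁻ p, (‖p.1 - p.2‖₊ : ℝ≥0∞) ^ 2 ∂(μ.prod ν) :=
    iInf₂_le _ ⟨inferInstance, h1, h2⟩
  intro htop
  rw [htop] at hle
  have hfin : (2:ℝ≥0∞)⁻¹ * ∫⁻ p, (‖p.1 - p.2‖₊ : ℝ≥0∞) ^ 2 ∂(μ.prod ν) ≠ ⊤ := by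
    apply ENNReal.mul_ne_top (by norm_num)
    exact ne_top_of_le_ne_top
      (ENNReal.mul_ne_top (by norm_num) (ENNReal.add_ne_top.mpr ⟨h2μ, h2ν⟩)) hb
  exact hfin (top_le_iff.mp hle)

end measure

end AuxLemmas

open Finset in
set_option maxHeartbeats 1000000 in
/-- if a feasible policy has dynamic cost equal to `W₂²(μsrc, μtgt)`, then for
`μsrc`-a.e. `x` all increments of the induced trajectory coincide (`π̄_h(x) − π̄_{h−1}(x) =
π̄_0(x) − x` for all `h ≤ H`), and the composite map `π̄_H` is an optimal Monge map. -/
theorem stmt6 {d : ℕ} (hd : 1 ≤ d) (H : ℕ)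
    (μsrc μtgt : Measure (EuclideanSpace ℝ (Fin d)))
    [IsProbabilityMeasure μsrc] [IsProbabilityMeasure μtgt]
    (h2src : ∫⁻ x, (‖x‖₊ : ℝ≥0∞) ^ 2 ∂μsrc ≠ ⊤)
    (h2tgt : ∫⁻ x, (‖x‖₊ : ℝ≥0∞) ^ 2 ∂μtgt ≠ ⊤)
    (π : ℕ → EuclideanSpace ℝ (Fin d) → EuclideanSpace ℝ (Fin d))
    (hmeas : ∀ h ≤ H, Measurable (π h))
    (hfeas : μsrc.map (trajComp π (H + 1)) = μtgt)
    (hopt : ((H : ℝ≥0∞) + 1) / 2 *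
        ∑ h ∈ Finset.range (H + 1),
          ∫⁻ x, (‖trajComp π (h + 1) x - trajComp π h x‖₊ : ℝ≥0∞) ^ 2 ∂μsrc =
      W2sq μsrc μtgt) :
    (∀ᵐ x ∂μsrc, ∀ h ≤ H,
        trajComp π (h + 1) x - trajComp π h x = trajComp π 1 x - x) ∧
    2⁻¹ * ∫⁻ x, (‖trajComp π (H + 1) x - x‖₊ : ℝ≥0∞) ^ 2 ∂μsrc = W2sq μsrc μtgt := by
  -- measurability of partial compositions
  have htraj : ∀ h ≤ H + 1, Measurable (trajComp π h) := by
    intro h hh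
    induction h with
    | zero => exact measurable_id
    | succ k ih =>
      exact (hmeas k (Nat.lt_succ_iff.mp hh)).comp (ih (Nat.le_of_succ_le hh))
  have hΔmeas : ∀ h ∈ Finset.range (H + 1),
      Measurable fun x => (‖trajComp π (h + 1) x - trajComp π h x‖₊ : ℝ≥0∞) ^ 2 := by
    intro h hh
    rw [Finset.mem_range] at hh
    exact ((htraj (h + 1) hh).sub (htraj h hh.le)).nnnorm.coe_nnreal_ennreal.pow_const 2
  -- telescoping
  have htel : ∀ x, trajComp π (H + 1) x - x
      = ∑ h ∈ Finset.range (H + 1), (trajComp π (h + 1) x - trajComp π h x) := by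
    intro x
    rw [Finset.sum_range_sub (fun h => trajComp π h x)]
    simp [trajComp]
  -- the two integrands
  set T : EuclideanSpace ℝ (Fin d) → ℝ≥0∞ :=
    fun x => (‖trajComp π (H + 1) x - x‖₊ : ℝ≥0∞) ^ 2 with hT
  set S : EuclideanSpace ℝ (Fin d) → ℝ≥0∞ :=
    fun x => ∑ h ∈ Finset.range (H + 1),
      (‖trajComp π (h + 1) x - trajComp π h x‖₊ : ℝ≥0∞) ^ 2 with hS
  have hpt : ∀ x, T x ≤ ((H + 1 : ℕ) : ℝ≥0∞) * S x := by
    intro x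
    rw [hT]
    simp only [htel x]
    exact enn_norm_sum_sq_le (H + 1) fun h => trajComp π (h + 1) x - trajComp π h x
  have hSmeas : Measurable S := Finset.measurable_sum _ hΔmeas
  have hSint : ∑ h ∈ Finset.range (H + 1),
      ∫⁻ x, (‖trajComp π (h + 1) x - trajComp π h x‖₊ : ℝ≥0∞) ^ 2 ∂μsrc
      = ∫⁻ x, S x ∂μsrc := (lintegral_finset_sum _ hΔmeas).symm
  have hcast : ((H : ℝ≥0∞) + 1) = ((H + 1 : ℕ) : ℝ≥0∞) := by push_cast; ring
  have hopt' : 2⁻¹ * (((H + 1 : ℕ) : ℝ≥0∞) * ∫⁻ x, S x ∂μsrc) = W2sq μsrc μtgt := by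
    rw [← hopt, hSint, hcast, ENNReal.div_eq_inv_mul, mul_assoc]
  have hW : W2sq μsrc μtgt ≠ ⊤ := W2sq_ne_top h2src h2tgt
  -- the chain of inequalities
  have hchain1 : W2sq μsrc μtgt ≤ 2⁻¹ * ∫⁻ x, T x ∂μsrc :=
    W2sq_le_map (trajComp π (H + 1)) (htraj (H + 1) le_rfl) hfeas
  have hTleS : ∫⁻ x, T x ∂μsrc ≤ ((H + 1 : ℕ) : ℝ≥0∞) * ∫⁻ x, S x ∂μsrc := by
    rw [← lintegral_const_mul _ hSmeas]
    exact lintegral_mono hpt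
  have hmain : 2⁻¹ * ∫⁻ x, T x ∂μsrc = W2sq μsrc μtgt := by
    refine le_antisymm ?_ hchain1
    rw [← hopt']
    exact mul_le_mul_right hTleS _
  refine ⟨?_, hmain⟩
  -- finiteness of ∫ T
  have hTfin : ∫⁻ x, T x ∂μsrc ≠ ⊤ := by
    intro htop
    rw [htop] at hmain
    simp [ENNReal.mul_top] at hmain
    exact hW hmain.symm
  -- ∫ T = ∫ (n * S)
  have hinteq : ∫⁻ x, T x ∂μsrc = ∫⁻ x, ((H + 1 : ℕ) : ℝ≥0∞) * S x ∂μsrc := by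
    rw [lintegral_const_mul _ hSmeas]
    refine le_antisymm hTleS ?_
    have h2 : 2⁻¹ * (((H + 1 : ℕ) : ℝ≥0∞) * ∫⁻ x, S x ∂μsrc) = 2⁻¹ * ∫⁻ x, T x ∂μsrc := by
      rw [hopt', hmain]
    have := (ENNReal.mul_right_inj (by norm_num) (by norm_num)).mp h2
    exact this.le
  -- a.e. equality
  have hae : ∀ᵐ x ∂μsrc, T x = ((H + 1 : ℕ) : ℝ≥0∞) * S x := by
    have hTm : Measurable T := ((htraj (H + 1) le_rfl).sub measurable_id).nnnorm.coe_nnreal_ennreal.pow_const 2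
    exact ae_eq_of_ae_le_of_lintegral_le (ae_of_all _ hpt) hTfin
      ((measurable_const.mul hSmeas).aemeasurable) hinteq.ge
  filter_upwards [hae] with x hx
  intro h hh
  have hx' : (‖∑ i ∈ Finset.range (H + 1), (trajComp π (i + 1) x - trajComp π i x)‖₊ : ℝ≥0∞) ^ 2
      = ((H + 1 : ℕ) : ℝ≥0∞) * ∑ i ∈ Finset.range (H + 1),
        (‖trajComp π (i + 1) x - trajComp π i x‖₊ : ℝ≥0∞) ^ 2 := by
    rw [← htel x]; exact hx
  have := eq_of_norm_sum_sq_eq (H + 1) _ (real_eq_of_enn_eq (H + 1) _ hx')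
  have heq := this h (Finset.mem_range.mpr (Nat.lt_succ_of_le hh)) 0
    (Finset.mem_range.mpr (Nat.succ_pos H))
  simpa [trajComp] using heq
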